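/- arXiv:2604.03038 — 3 statements merged into one kernel-verified Lean document; each statement's English description precedes it below -/
import Mathlib

section
/- Let $\{X_k\}$ be i.i.d. real random variables with $\mathbb{E}[X_1] > 0$ and suppose there exists $R > 0$ with $\mathbb{E}[e^{-RX_1}] = 1$. Let $S_n = x + \sum_{k=1}^n X_k$ with $x \geq 0$ and $\tau_- = \inf\{n \geq 1 : S_n < 0\}$. Then $\mathbb{P}[\tau_- < \infty] \leq e^{-Rx}$. -/
open MeasureTheory ProbabilityTheory

namespace LundbergAux

/-- Random walk on path space. -/
noncomputable def SS (x : ℝ) (n : ℕ) (u : ℕ → ℝ) : ℝ := x + ∑ k ∈ Finset.range n, u k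

/-- Ruin-by-time-`N` event on path space. -/
def BB (x : ℝ) (N : ℕ) : Set (ℕ → ℝ) := {u | ∃ n, 1 ≤ n ∧ n ≤ N ∧ SS x n u < 0}

open Classical in
/-- Stopped exponential process `exp (-R * S_{τ ∧ N})`, as `ℝ≥0∞`. -/
noncomputable def FF (R x : ℝ) : ℕ → (ℕ → ℝ) → ENNReal
  | 0 => fun _ => ENNReal.ofReal (Real.exp (-R * x))
  | (N + 1) => fun u =>
      if u ∈ BB x N then FF R x N u
      else ENNReal.ofReal (Real.exp (-R * SS x (N + 1) u))

lemma measurable_SS (x : ℝ) (n : ℕ) : Measurable (SS x n) := by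
  unfold SS
  exact (Finset.measurable_sum _ fun k _ => measurable_pi_apply k).const_add x

lemma measurableSet_BB (x : ℝ) (N : ℕ) : MeasurableSet (BB x N) := by
  have : BB x N = ⋃ (n : ℕ), ⋃ (_ : 1 ≤ n ∧ n ≤ N), {u | SS x n u < 0} := by
    ext u; simp [BB, and_assoc]
  rw [this]
  exact MeasurableSet.iUnion fun n => MeasurableSet.iUnion fun _ =>
    measurableSet_lt (measurable_SS x n) measurable_const

lemma measurable_FF (R x : ℝ) (N : ℕ) : Measurable (FF R x N) := by
  induction N with
  | zero => exact measurable_const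
  | succ N ih =>
      exact Measurable.ite (measurableSet_BB x N) ih
        (ENNReal.measurable_ofReal.comp ((measurable_SS x (N+1)).const_mul (-R)).exp)

lemma BB_mono (x : ℝ) {N M : ℕ} (h : N ≤ M) : BB x N ⊆ BB x M := by
  rintro u ⟨n, h1, h2, h3⟩; exact ⟨n, h1, h2.trans h, h3⟩

lemma FF_of_not_mem (R x : ℝ) (N : ℕ) (u : ℕ → ℝ) (hu : u ∉ BB x N) :
    FF R x N u = ENNReal.ofReal (Real.exp (-R * SS x N u)) := by
  induction N with
  | zero => simp [FF, SS]
  | succ N ih =>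
      have : u ∉ BB x N := fun h => hu (BB_mono x (Nat.le_succ N) h)
      simp [FF, this]

lemma one_le_FF {R : ℝ} (hR : 0 < R) (x : ℝ) (N : ℕ) (u : ℕ → ℝ) (hu : u ∈ BB x N) :
    1 ≤ FF R x N u := by
  induction N with
  | zero => obtain ⟨n, h1, h2, _⟩ := hu; omega
  | succ N ih =>
      by_cases hN : u ∈ BB x N
      · simp only [FF, if_pos hN]; exact ih hN
      · obtain ⟨n, h1, h2, h3⟩ := hu
        have hn : n = N + 1 := by
          rcases Nat.lt_or_ge n (N + 1) with h | h
          · exact absurd ⟨n, h1, Nat.lt_succ_iff.mp h, h3⟩ hN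
          · omega
        subst hn
        simp only [FF, if_neg hN]
        rw [show (1 : ENNReal) = ENNReal.ofReal 1 by simp]
        exact ENNReal.ofReal_le_ofReal (Real.one_le_exp (by nlinarith))

/-- `SS` depends only on the first `n` coordinates. -/
lemma SS_congr (x : ℝ) (n : ℕ) {u v : ℕ → ℝ} (h : ∀ k < n, u k = v k) :
    SS x n u = SS x n v := by
  unfold SS
  congr 1
  exact Finset.sum_congr rfl fun k hk => h k (Finset.mem_range.mp hk)

lemma BB_congr (x : ℝ) (N : ℕ) {u v : ℕ → ℝ} (h : ∀ k < N, u k = v k) :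
    u ∈ BB x N ↔ v ∈ BB x N := by
  constructor <;> rintro ⟨n, h1, h2, h3⟩
  · exact ⟨n, h1, h2, by rwa [SS_congr x n (fun k hk => (h k (lt_of_lt_of_le hk h2)).symm)]⟩
  · exact ⟨n, h1, h2, by rwa [SS_congr x n (fun k hk => h k (lt_of_lt_of_le hk h2))]⟩

/-- Indicator of survival times the current exponential. -/
noncomputable def GG (R x : ℝ) (N : ℕ) : (ℕ → ℝ) → ENNReal :=
  (BB x N)ᶜ.indicator fun u => ENNReal.ofReal (Real.exp (-R * SS x N u))

lemma measurable_GG (R x : ℝ) (N : ℕ) : Measurable (GG R x N) :=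
  Measurable.indicator
    (ENNReal.measurable_ofReal.comp ((measurable_SS x N).const_mul (-R)).exp)
    (measurableSet_BB x N).compl

lemma GG_congr (R x : ℝ) (N : ℕ) {u v : ℕ → ℝ} (h : ∀ k < N, u k = v k) :
    GG R x N u = GG R x N v := by
  unfold GG
  by_cases hu : u ∈ BB x N
  · rw [Set.indicator_of_notMem (by simpa using hu),
      Set.indicator_of_notMem (by simpa using (BB_congr x N h).mp hu)]
  · rw [Set.indicator_of_mem (by simpa using hu),
      Set.indicator_of_mem (by simpa using fun hv => hu ((BB_congr x N h).mpr hv)),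
      SS_congr x N fun k hk => h k hk]

/-- Key pointwise decomposition of the stopped process. -/
lemma FF_succ_eq (R x : ℝ) (N : ℕ) (u : ℕ → ℝ) :
    FF R x (N + 1) u
      = (BB x N).indicator (FF R x N) u
        + GG R x N u * ENNReal.ofReal (Real.exp (-R * u N)) := by
  by_cases hu : u ∈ BB x N
  · simp [FF, hu, GG, Set.indicator_of_mem, Set.indicator_of_notMem]
  · rw [Set.indicator_of_notMem hu]
    simp only [FF, if_neg hu, GG, Set.indicator_of_mem (Set.mem_compl hu), zero_add]
    rw [← ENNReal.ofReal_mul (Real.exp_nonneg _), ← Real.exp_add]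
    congr 2
    simp [SS, Finset.sum_range_succ]
    ring

/-- Decomposition of the stopped process: indicator part plus survival part. -/
lemma indicator_add_GG (R x : ℝ) (N : ℕ) (u : ℕ → ℝ) :
    (BB x N).indicator (FF R x N) u + GG R x N u = FF R x N u := by
  by_cases hu : u ∈ BB x N
  · simp [Set.indicator_of_mem, hu, GG, Set.indicator_of_notMem]
  · rw [Set.indicator_of_notMem hu, zero_add, GG,
      Set.indicator_of_mem (Set.mem_compl hu), FF_of_not_mem R x N u hu]

end LundbergAux

open MeasureTheory ProbabilityTheory

/-- Lundberg's inequality: for an i.i.d. positive-drift random walk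
`S n = x + ∑_{k<n} X k` with adjustment coefficient `R > 0`
(`E[e^{-R X}] = 1`) and `x ≥ 0`, the ultimate ruin probability satisfies
`ℙ[∃ n ≥ 1, S n < 0] ≤ e^{-R x}`. -/
theorem lundberg_inequality
    {Ω : Type*} [MeasurableSpace Ω] (μ : Measure Ω) [IsProbabilityMeasure μ]
    (X : ℕ → Ω → ℝ) (hmeas : ∀ i, Measurable (X i))
    (hindep : iIndepFun X μ)
    (hident : ∀ i, IdentDistrib (X i) (X 0) μ μ)
    (hint : Integrable (X 0) μ) (hmean : 0 < ∫ ω, X 0 ω ∂μ)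
    (R : ℝ) (hR : 0 < R)
    (hadj : ∫ ω, Real.exp (-R * X 0 ω) ∂μ = 1)
    (x : ℝ) (hx : 0 ≤ x) :
    (μ {ω | ∃ n : ℕ, 1 ≤ n ∧ x + ∑ k ∈ Finset.range n, X k ω < 0}).toReal
      ≤ Real.exp (-R * x) := by
  classical
  open LundbergAux in
  -- the path map
  set p : Ω → (ℕ → ℝ) := fun ω k => X k ω with hp
  have hpm : Measurable p := measurable_pi_lambda _ hmeas
  -- integrability and mean-one of the exponentials
  have hint0 : Integrable (fun ω => Real.exp (-R * X 0 ω)) μ := by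
    by_contra h
    rw [integral_undef h] at hadj
    norm_num at hadj
  have hid : ∀ N : ℕ, IdentDistrib (fun ω => Real.exp (-R * X N ω))
      (fun ω => Real.exp (-R * X 0 ω)) μ μ :=
    fun N => (hident N).comp ((measurable_id.const_mul (-R)).exp)
  have hintN : ∀ N : ℕ, Integrable (fun ω => Real.exp (-R * X N ω)) μ :=
    fun N => (hid N).integrable_iff.mpr hint0
  have hl1 : ∀ N : ℕ, ∫⁻ ω, ENNReal.ofReal (Real.exp (-R * X N ω)) ∂μ = 1 := by
    intro N
    rw [← ofReal_integral_eq_lintegral_ofReal (hintN N)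
      (Filter.Eventually.of_forall fun ω => Real.exp_nonneg _)]
    rw [(hid N).integral_eq, hadj, ENNReal.ofReal_one]
  -- independence of GG∘p and exp(-R X_N)
  have hindGG : ∀ N : ℕ, IndepFun (fun ω => GG R x N (p ω))
      (fun ω => ENNReal.ofReal (Real.exp (-R * X N ω))) μ := by
    intro N
    have hdisj : Disjoint (Finset.range N) ({N} : Finset ℕ) := by
      simp only [Finset.disjoint_left, Finset.mem_range, Finset.mem_singleton]
      omega
    have hW := hindep.indepFun_finset (Finset.range N) {N} hdisj hmeas
    set Φ : ((i : (Finset.range N : Finset ℕ)) → ℝ) → ENNReal :=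
      fun v => GG R x N (fun k => if h : k ∈ Finset.range N then v ⟨k, h⟩ else 0) with hΦ
    set Ψ : ((i : ({N} : Finset ℕ)) → ℝ) → ENNReal :=
      fun v => ENNReal.ofReal (Real.exp (-R * v ⟨N, Finset.mem_singleton_self N⟩)) with hΨ
    have hΦm : Measurable Φ := by
      apply (measurable_GG R x N).comp
      apply measurable_pi_lambda
      intro k
      by_cases h : k ∈ Finset.range N
      · simpa [h] using measurable_pi_apply (⟨k, h⟩ : (Finset.range N : Finset ℕ))
      · simpa [h] using measurable_const
    have hΨm : Measurable Ψ :=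
      ENNReal.measurable_ofReal.comp
        (by fun_prop)
    have heq : (fun ω => GG R x N (p ω))
        = Φ ∘ (fun ω (i : (Finset.range N : Finset ℕ)) => X i ω) := by
      funext ω
      show GG R x N (p ω) = Φ (fun i => X i ω)
      rw [hΦ]
      apply GG_congr
      intro k hk
      simp [p, Finset.mem_range.mpr hk]
    rw [heq]
    exact hW.comp hΦm hΨm
  -- the martingale-style induction
  have key : ∀ N : ℕ, ∫⁻ ω, FF R x N (p ω) ∂μ = ENNReal.ofReal (Real.exp (-R * x)) := by
    intro N
    induction N with
    | zero => simp [FF]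
    | succ N ih =>
        have hmi : Measurable fun ω => (BB x N).indicator (FF R x N) (p ω) :=
          ((measurable_FF R x N).indicator (measurableSet_BB x N)).comp hpm
        have hmg : Measurable fun ω => GG R x N (p ω) := (measurable_GG R x N).comp hpm
        have hme : Measurable fun ω => ENNReal.ofReal (Real.exp (-R * X N ω)) :=
          ENNReal.measurable_ofReal.comp (((hmeas N).const_mul (-R)).exp)
        calc ∫⁻ ω, FF R x (N + 1) (p ω) ∂μ
            = ∫⁻ ω, (BB x N).indicator (FF R x N) (p ω)
                + GG R x N (p ω) * ENNReal.ofReal (Real.exp (-R * X N ω)) ∂μ := by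
              apply lintegral_congr
              intro ω
              rw [FF_succ_eq]
          _ = (∫⁻ ω, (BB x N).indicator (FF R x N) (p ω) ∂μ)
                + ∫⁻ ω, GG R x N (p ω) * ENNReal.ofReal (Real.exp (-R * X N ω)) ∂μ :=
              lintegral_add_left hmi _
          _ = (∫⁻ ω, (BB x N).indicator (FF R x N) (p ω) ∂μ)
                + (∫⁻ ω, GG R x N (p ω) ∂μ)
                  * ∫⁻ ω, ENNReal.ofReal (Real.exp (-R * X N ω)) ∂μ := by
              rw [lintegral_mul_eq_lintegral_mul_lintegral_of_indepFun''
                hmg.aemeasurable hme.aemeasurable (hindGG N)]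
          _ = (∫⁻ ω, (BB x N).indicator (FF R x N) (p ω) ∂μ)
                + ∫⁻ ω, GG R x N (p ω) ∂μ := by rw [hl1 N, mul_one]
          _ = ∫⁻ ω, (BB x N).indicator (FF R x N) (p ω) + GG R x N (p ω) ∂μ :=
              (lintegral_add_left hmi _).symm
          _ = ∫⁻ ω, FF R x N (p ω) ∂μ :=
              lintegral_congr fun ω => indicator_add_GG R x N (p ω)
          _ = ENNReal.ofReal (Real.exp (-R * x)) := ih
  -- measure bound for each N
  have hbound : ∀ N : ℕ, μ (p ⁻¹' BB x N) ≤ ENNReal.ofReal (Real.exp (-R * x)) := by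
    intro N
    rw [← key N, ← lintegral_indicator_one (hpm (measurableSet_BB x N))]
    apply lintegral_mono
    intro ω
    by_cases h : ω ∈ p ⁻¹' BB x N
    · rw [Set.indicator_of_mem h]
      exact one_le_FF hR x N (p ω) h
    · rw [Set.indicator_of_notMem h]
      exact zero_le
  -- the ruin event is the increasing union
  have hset : {ω | ∃ n : ℕ, 1 ≤ n ∧ x + ∑ k ∈ Finset.range n, X k ω < 0}
      = ⋃ N : ℕ, p ⁻¹' BB x N := by
    ext ω
    simp only [Set.mem_setOf_eq, Set.mem_iUnion, Set.mem_preimage]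
    constructor
    · rintro ⟨n, h1, h2⟩
      exact ⟨n, n, h1, le_refl n, h2⟩
    · rintro ⟨N, n, h1, _, h3⟩
      exact ⟨n, h1, h3⟩
  have hmono : Monotone fun N => p ⁻¹' BB x N :=
    fun N M h => Set.preimage_mono (BB_mono x h)
  have hfinal : μ {ω | ∃ n : ℕ, 1 ≤ n ∧ x + ∑ k ∈ Finset.range n, X k ω < 0}
      ≤ ENNReal.ofReal (Real.exp (-R * x)) := by
    rw [hset, hmono.directed_le.measure_iUnion]
    exact iSup_le hbound
  exact ENNReal.toReal_le_of_le_ofReal (Real.exp_nonneg _) hfinal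
end

section
/- Let $\{S_n\}_{n \geq 0}$ be an adapted integrable process with increments $\Delta S_n = S_n - S_{n-1}$, satisfying (A1) $\mathbb{E}[\Delta S_n \mid \mathcal{F}_{n-1}] \geq \mu > 0$ a.s. for all $n$, and (A2) $\mathbb{E}[\Delta S_n - y \mid \mathcal{F}_{n-1}, \Delta S_n > y] \leq \eta_0 < \infty$ a.s. for all $n \geq 1$ and $y \geq 0$ (whenever the conditioning event has positive probability). Let $\tau_b = \inf\{n \geq 1 : S_n > b\}$. Then $\tau_b < \infty$ a.s. and $\mathbb{E}[\tau_b] \leq \frac{(b - S_0)^+ + \eta_0}{\mu}$. -/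
open MeasureTheory

/-- Submartingale stopping-time bound (Theorem: hitting time under drift and
one-step mean-overshoot conditions). Under (A1) uniform conditional drift
`E[ΔS n | ℱ (n-1)] ≥ c > 0` and (A2) uniform one-step mean-overshoot
`E[(ΔS n - y)⁺ | ℱ (n-1)] ≤ η₀ ℙ[ΔS n > y | ℱ (n-1)]` for all `y ≥ 0`
(the conditional form of `E[ΔS n - y | ℱ (n-1), ΔS n > y] ≤ η₀`),
the first passage time `τ_b = inf{n ≥ 1 : S n > b}` is a.s. finite and
`E[τ_b] = ∑_{n≥0} ℙ[τ_b > n] ≤ ((b - S₀)⁺ + η₀)/c`. -/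
theorem submartingale_stopping_time_bound
    {Ω : Type*} {m0 : MeasurableSpace Ω} (μ : Measure Ω) [IsProbabilityMeasure μ]
    (ℱ : Filtration ℕ m0) (S : ℕ → Ω → ℝ)
    (hadapted : Adapted ℱ S) (hint : ∀ n, Integrable (S n) μ)
    (s0 : ℝ) (hS0 : ∀ ω, S 0 ω = s0)
    (c : ℝ) (hc : 0 < c)
    (hA1 : ∀ n : ℕ, 1 ≤ n →
      ∀ᵐ ω ∂μ, c ≤ (μ[fun ω => S n ω - S (n - 1) ω | ℱ (n - 1)]) ω)
    (η₀ : ℝ) (hη₀ : 0 < η₀)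
    (hA2 : ∀ n : ℕ, 1 ≤ n → ∀ y : ℝ, 0 ≤ y →
      ∀ᵐ ω ∂μ,
        (μ[fun ω => max (S n ω - S (n - 1) ω - y) 0 | ℱ (n - 1)]) ω
          ≤ η₀ * (μ[Set.indicator {ω | y < S n ω - S (n - 1) ω}
              (fun _ => (1 : ℝ)) | ℱ (n - 1)]) ω)
    (b : ℝ) :
    μ {ω | ∀ n : ℕ, 1 ≤ n → S n ω ≤ b} = 0 ∧
    ∑' n : ℕ, (μ {ω | ∀ m : ℕ, 1 ≤ m → m ≤ n → S m ω ≤ b}).toReal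
      ≤ (max (b - s0) 0 + η₀) / c := by
  classical
  have hSm : ∀ n, Measurable (S n) := fun n => (hadapted n).mono (ℱ.le n) le_rfl
  -- L1 : integrated drift bound
  have L1 : ∀ n (F : Set Ω), MeasurableSet[ℱ n] F →
      c * (μ F).toReal ≤ ∫ ω in F, (S (n + 1) ω - S n ω) ∂μ := by
    intro n F hF
    have hdint : Integrable (fun ω => S (n + 1) ω - S n ω) μ := (hint (n + 1)).sub (hint n)
    have hcond := hA1 (n + 1) le_add_self
    simp only [Nat.add_sub_cancel] at hcond
    calc c * (μ F).toReal = ∫ _ω in F, c ∂μ := by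
          rw [setIntegral_const, smul_eq_mul, mul_comm, measureReal_def]
      _ ≤ ∫ ω in F, (μ[fun ω => S (n + 1) ω - S n ω | ℱ n]) ω ∂μ :=
          setIntegral_mono_ae (integrable_const c).integrableOn
            integrable_condExp.integrableOn hcond
      _ = ∫ ω in F, (S (n + 1) ω - S n ω) ∂μ := setIntegral_condExp (ℱ.le n) hdint hF
  -- L2 : integrated overshoot bound, deterministic level
  have L2 : ∀ n (y : ℝ), 0 ≤ y → ∀ F : Set Ω, MeasurableSet[ℱ n] F →
      ∫ ω in F, max (S (n + 1) ω - S n ω - y) 0 ∂μ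
        ≤ η₀ * (μ (F ∩ {ω | y < S (n + 1) ω - S n ω})).toReal := by
    intro n y hy F hF
    have hEm : MeasurableSet {ω | y < S (n + 1) ω - S n ω} :=
      measurableSet_lt measurable_const ((hSm (n + 1)).sub (hSm n))
    have hgint : Integrable (fun ω => max (S (n + 1) ω - S n ω - y) 0) μ :=
      (((hint (n + 1)).sub (hint n)).sub (integrable_const y)).pos_part
    have hindint : Integrable
        (Set.indicator {ω | y < S (n + 1) ω - S n ω} (fun _ => (1 : ℝ))) μ :=
      (integrable_const 1).indicator hEm
    have hcond := hA2 (n + 1) le_add_self y hy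
    simp only [Nat.add_sub_cancel] at hcond
    calc ∫ ω in F, max (S (n + 1) ω - S n ω - y) 0 ∂μ
        = ∫ ω in F, (μ[fun ω => max (S (n + 1) ω - S n ω - y) 0 | ℱ n]) ω ∂μ :=
          (setIntegral_condExp (ℱ.le n) hgint hF).symm
      _ ≤ ∫ ω in F, η₀ * (μ[Set.indicator {ω | y < S (n + 1) ω - S n ω}
            (fun _ => (1 : ℝ)) | ℱ n]) ω ∂μ :=
          setIntegral_mono_ae integrable_condExp.integrableOn
            ((integrable_condExp.const_mul η₀).integrableOn) hcond
      _ = η₀ * ∫ ω in F, (μ[Set.indicator {ω | y < S (n + 1) ω - S n ω}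
            (fun _ => (1 : ℝ)) | ℱ n]) ω ∂μ := integral_const_mul η₀ _
      _ = η₀ * ∫ ω in F, Set.indicator {ω | y < S (n + 1) ω - S n ω}
            (fun _ => (1 : ℝ)) ω ∂μ := by
          rw [setIntegral_condExp (ℱ.le n) hindint hF]
      _ = η₀ * (μ (F ∩ {ω | y < S (n + 1) ω - S n ω})).toReal := by
          rw [setIntegral_indicator hEm, setIntegral_const, smul_eq_mul, mul_one, measureReal_def]
  -- L3 : integrated overshoot bound, random level
  have L3 : ∀ n (Y : Ω → ℝ), Measurable[ℱ n] Y → Integrable Y μ → (∀ ω, 0 ≤ Y ω) →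
      ∀ F : Set Ω, MeasurableSet[ℱ n] F →
      ∫ ω in F, max (S (n + 1) ω - S n ω - Y ω) 0 ∂μ
        ≤ η₀ * (μ (F ∩ {ω | Y ω < S (n + 1) ω - S n ω})).toReal := by
    intro n Y hYm hYint hY0 F hF
    have hYm0 : Measurable Y := hYm.mono (ℱ.le n) le_rfl
    set E := {ω | Y ω < S (n + 1) ω - S n ω} with hE_def
    have hEm : MeasurableSet E := measurableSet_lt hYm0 ((hSm (n + 1)).sub (hSm n))
    have hgint : Integrable (fun ω => max (S (n + 1) ω - S n ω - Y ω) 0) μ :=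
      (((hint (n + 1)).sub (hint n)).sub hYint).pos_part
    have hM1 : (μ (F ∩ E)).toReal ≤ 1 := by
      calc (μ (F ∩ E)).toReal ≤ (μ Set.univ).toReal :=
            ENNReal.toReal_mono (measure_ne_top _ _) (measure_mono (Set.subset_univ _))
        _ = 1 := by simp
    refine le_of_forall_pos_le_add fun ε hε => ?_
    set B : ℕ → Set Ω := fun j => F ∩ Y ⁻¹' Set.Ico ((j : ℝ) * ε) (((j : ℝ) + 1) * ε)
      with hB_def
    have hBF : ∀ j, MeasurableSet[ℱ n] (B j) := fun j => hF.inter (hYm measurableSet_Ico)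
    have hBm : ∀ j, MeasurableSet (B j) := fun j => ℱ.le n _ (hBF j)
    have hBmem : ∀ j : ℕ, ∀ ω ∈ B j, (j : ℝ) * ε ≤ Y ω ∧ Y ω < ((j : ℝ) + 1) * ε := by
      intro j ω hω
      have := hω.2
      simpa [Set.mem_Ico] using this
    have hBdisj : Pairwise (Function.onFun Disjoint B) := by
      intro i j hij
      refine Set.disjoint_left.mpr fun ω h1 h2 => hij ?_
      obtain ⟨hi1, hi2⟩ := hBmem i ω h1
      obtain ⟨hj1, hj2⟩ := hBmem j ω h2
      have h3 : (i : ℝ) < (j : ℝ) + 1 := by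
        have := lt_of_le_of_lt hi1 hj2
        exact (mul_lt_mul_iff_left₀ hε).mp this
      have h4 : (j : ℝ) < (i : ℝ) + 1 := by
        have := lt_of_le_of_lt hj1 hi2
        exact (mul_lt_mul_iff_left₀ hε).mp this
      have h5 : i < j + 1 := by exact_mod_cast h3
      have h6 : j < i + 1 := by exact_mod_cast h4
      omega
    have hBunion : ⋃ j, B j = F := by
      apply Set.Subset.antisymm (Set.iUnion_subset fun j => Set.inter_subset_left)
      intro ω hω
      refine Set.mem_iUnion.mpr ⟨⌊Y ω / ε⌋₊, hω, ?_⟩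
      simp only [Set.mem_preimage, Set.mem_Ico]
      constructor
      · have h1 : (⌊Y ω / ε⌋₊ : ℝ) ≤ Y ω / ε := Nat.floor_le (div_nonneg (hY0 ω) hε.le)
        calc (⌊Y ω / ε⌋₊ : ℝ) * ε ≤ (Y ω / ε) * ε :=
              mul_le_mul_of_nonneg_right h1 hε.le
          _ = Y ω := div_mul_cancel₀ _ hε.ne'
      · have h2 : Y ω / ε < ⌊Y ω / ε⌋₊ + 1 := Nat.lt_floor_add_one _
        calc Y ω = (Y ω / ε) * ε := (div_mul_cancel₀ _ hε.ne').symm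
          _ < ((⌊Y ω / ε⌋₊ : ℝ) + 1) * ε := mul_lt_mul_of_pos_right h2 hε
    have hpiece : ∀ j : ℕ, ∫ ω in B j, max (S (n + 1) ω - S n ω - Y ω) 0 ∂μ
        ≤ (η₀ + ε) * (μ (B j ∩ E)).toReal := by
      intro j
      have hint2 : Integrable (fun ω =>
          max (S (n + 1) ω - S n ω - ((j : ℝ) + 1) * ε) 0
            + ε * Set.indicator E (fun _ => (1 : ℝ)) ω) μ :=
        ((((hint (n + 1)).sub (hint n)).sub (integrable_const _)).pos_part).add
          (((integrable_const 1).indicator hEm).const_mul ε)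
      have hptwise : ∀ ω ∈ B j, max (S (n + 1) ω - S n ω - Y ω) 0
          ≤ max (S (n + 1) ω - S n ω - ((j : ℝ) + 1) * ε) 0
            + ε * Set.indicator E (fun _ => (1 : ℝ)) ω := by
        intro ω hω
        obtain ⟨hYge, hYlt⟩ := hBmem j ω hω
        by_cases hcase : Y ω < S (n + 1) ω - S n ω
        · have hmem : ω ∈ E := hcase
          have hind : Set.indicator E (fun _ => (1 : ℝ)) ω = 1 := by
            simp [Set.indicator_of_mem hmem]
          rw [hind, max_eq_left (by linarith)]
          have h8 := le_max_left (S (n + 1) ω - S n ω - ((j : ℝ) + 1) * ε) (0 : ℝ)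
          have h9 : ((j : ℝ) + 1) * ε - Y ω ≤ ε := by
            have : ((j : ℝ) + 1) * ε = (j : ℝ) * ε + ε := by ring
            linarith
          linarith
        · rw [max_eq_right (by linarith)]
          exact add_nonneg (le_max_right _ _)
            (mul_nonneg hε.le (Set.indicator_nonneg (fun _ _ => zero_le_one) ω))
      have hstep1 : ∫ ω in B j, max (S (n + 1) ω - S n ω - Y ω) 0 ∂μ
          ≤ ∫ ω in B j, (max (S (n + 1) ω - S n ω - ((j : ℝ) + 1) * ε) 0
              + ε * Set.indicator E (fun _ => (1 : ℝ)) ω) ∂μ :=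
        setIntegral_mono_on hgint.integrableOn hint2.integrableOn (hBm j) hptwise
      have hq1 : Integrable (fun ω => max (S (n + 1) ω - S n ω - ((j : ℝ) + 1) * ε) 0) μ := by
        exact (((hint (n + 1)).sub (hint n)).sub (integrable_const _)).pos_part
      have hq2 : Integrable (fun ω => ε * Set.indicator E (fun _ => (1 : ℝ)) ω) μ := by
        exact ((integrable_const 1).indicator hEm).const_mul ε
      have hstep2 : ∫ ω in B j, (max (S (n + 1) ω - S n ω - ((j : ℝ) + 1) * ε) 0
              + ε * Set.indicator E (fun _ => (1 : ℝ)) ω) ∂μ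
          = ∫ ω in B j, max (S (n + 1) ω - S n ω - ((j : ℝ) + 1) * ε) 0 ∂μ
              + ε * (μ (B j ∩ E)).toReal := by
        rw [integral_add hq1.integrableOn hq2.integrableOn]
        congr 1
        rw [integral_const_mul, setIntegral_indicator hEm, setIntegral_const,
          smul_eq_mul, mul_one, measureReal_def]
      have hstep3 := L2 n (((j : ℝ) + 1) * ε) (by positivity) (B j) (hBF j)
      have hsub : B j ∩ {ω | ((j : ℝ) + 1) * ε < S (n + 1) ω - S n ω} ⊆ B j ∩ E := by
        intro ω hω
        refine ⟨hω.1, ?_⟩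
        have h1 := (hBmem j ω hω.1).2
        have h2 : ((j : ℝ) + 1) * ε < S (n + 1) ω - S n ω := hω.2
        exact lt_trans h1 h2
      have hmono : (μ (B j ∩ {ω | ((j : ℝ) + 1) * ε < S (n + 1) ω - S n ω})).toReal
          ≤ (μ (B j ∩ E)).toReal :=
        ENNReal.toReal_mono (measure_ne_top _ _) (measure_mono hsub)
      have h10 := mul_le_mul_of_nonneg_left hmono hη₀.le
      have h11 : (0:ℝ) ≤ (μ (B j ∩ E)).toReal := ENNReal.toReal_nonneg
      nlinarith [hstep1, hstep2, hstep3]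
    have hHasSum : HasSum (fun j => ∫ ω in B j, max (S (n + 1) ω - S n ω - Y ω) 0 ∂μ)
        (∫ ω in F, max (S (n + 1) ω - S n ω - Y ω) 0 ∂μ) := by
      have := hasSum_integral_iUnion hBm hBdisj
        (hgint.integrableOn : IntegrableOn _ (⋃ j, B j) μ)
      rwa [hBunion] at this
    have hμeq : ∑' j, μ (B j ∩ E) = μ (F ∩ E) := by
      rw [← measure_iUnion
        (fun i j hij => ((hBdisj hij).mono Set.inter_subset_left Set.inter_subset_left))
        (fun j => (hBm j).inter hEm)]
      rw [← Set.iUnion_inter, hBunion]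
    have hsummable2 : Summable fun j => (μ (B j ∩ E)).toReal :=
      ENNReal.summable_toReal (by rw [hμeq]; exact measure_ne_top _ _)
    have htsum2 : ∑' j, (μ (B j ∩ E)).toReal = (μ (F ∩ E)).toReal := by
      rw [← ENNReal.tsum_toReal_eq fun j => measure_ne_top _ _, hμeq]
    calc ∫ ω in F, max (S (n + 1) ω - S n ω - Y ω) 0 ∂μ
        = ∑' j, ∫ ω in B j, max (S (n + 1) ω - S n ω - Y ω) 0 ∂μ := hHasSum.tsum_eq.symm
      _ ≤ ∑' j, (η₀ + ε) * (μ (B j ∩ E)).toReal :=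
          Summable.tsum_le_tsum hpiece hHasSum.summable (hsummable2.mul_left _)
      _ = (η₀ + ε) * (μ (F ∩ E)).toReal := by rw [tsum_mul_left, htsum2]
      _ ≤ η₀ * (μ (F ∩ E)).toReal + ε := by nlinarith [ENNReal.toReal_nonneg (a := μ (F ∩ E))]
  -- the events A n = {τ > n}
  set A : ℕ → Set Ω := fun n => {ω | ∀ m : ℕ, 1 ≤ m → m ≤ n → S m ω ≤ b} with hA_def
  have hA0 : A 0 = Set.univ := by
    ext ω; simp only [hA_def, Set.mem_setOf_eq, Set.mem_univ, iff_true]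
    intro m h1 h2; omega
  have hAF : ∀ n, MeasurableSet[ℱ n] (A n) := by
    intro n
    have heq : A n = ⋂ m ∈ Set.Icc 1 n, {ω | S m ω ≤ b} := by
      ext ω
      simp only [hA_def, Set.mem_setOf_eq, Set.mem_iInter, Set.mem_Icc, and_imp]
    rw [heq]
    refine MeasurableSet.biInter (Set.to_countable _) fun m hm => ?_
    exact measurableSet_le ((hadapted m).mono (ℱ.mono hm.2) le_rfl) measurable_const
  have hAm : ∀ n, MeasurableSet (A n) := fun n => ℱ.le n _ (hAF n)
  have hAmono : ∀ n, A (n + 1) ⊆ A n := fun n ω hω m h1 h2 => hω m h1 (h2.trans (Nat.le_succ n))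
  have hDeq : ∀ n, A n \ A (n + 1) = A n ∩ {ω | b < S (n + 1) ω} := by
    intro n; ext ω
    simp only [Set.mem_diff, Set.mem_inter_iff, Set.mem_setOf_eq, hA_def]
    constructor
    · rintro ⟨h1, h2⟩
      refine ⟨h1, ?_⟩
      by_contra hle
      push_neg at hle
      refine h2 fun m hm1 hm2 => ?_
      by_cases hm : m ≤ n
      · exact h1 m hm1 hm
      · have hmeq : m = n + 1 := by omega
        subst hmeq
        exact hle
    · rintro ⟨h1, h2⟩
      exact ⟨h1, fun h => absurd (h (n + 1) (by omega) le_rfl) (not_le.mpr h2)⟩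
  set Y : ℕ → Ω → ℝ := fun n ω => max (b - S n ω) 0 with hY_def
  have hYmF : ∀ n, Measurable[ℱ n] (Y n) := fun n =>
    (measurable_const.sub (hadapted n)).max measurable_const
  have hYint : ∀ n, Integrable (Y n) μ := fun n => ((integrable_const b).sub (hint n)).pos_part
  have hY0 : ∀ n ω, 0 ≤ Y n ω := fun n ω => le_max_right _ _
  set e : ℕ → ℝ := fun n => if n = 0 then max (s0 - b) 0 else 0 with he_def
  have he0 : ∀ n, 0 ≤ e n := by
    intro n; by_cases h : n = 0 <;> simp [he_def, h, le_max_right]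
  set a : ℕ → ℝ := fun n => (μ (A n)).toReal with ha_def
  have ha0 : ∀ n, 0 ≤ a n := fun n => ENNReal.toReal_nonneg
  have ha1 : a 0 = 1 := by simp [ha_def, hA0]
  have haMono : ∀ n, a (n + 1) ≤ a n := fun n =>
    ENNReal.toReal_mono (measure_ne_top _ _) (measure_mono (hAmono n))
  have haLe1 : ∀ n, a n ≤ 1 := by
    intro n
    calc a n = (μ (A n)).toReal := rfl
      _ ≤ (μ Set.univ).toReal :=
        ENNReal.toReal_mono (measure_ne_top _ _) (measure_mono (Set.subset_univ _))
      _ = 1 := by simp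
  have haTele : ∀ n, (μ (A n \ A (n + 1))).toReal = a n - a (n + 1) := by
    intro n
    rw [measure_diff (hAmono n) (hAm (n + 1)).nullMeasurableSet (measure_ne_top μ _),
      ENNReal.toReal_sub_of_le (measure_mono (hAmono n)) (measure_ne_top _ _)]
  -- one-step inequality
  have hstep : ∀ n, ∫ ω in A n, (S (n + 1) ω - S n ω) ∂μ
      ≤ ((∫ ω in A (n + 1), S (n + 1) ω ∂μ) - ∫ ω in A n, S n ω ∂μ)
        + (η₀ + b + e n) * (a n - a (n + 1)) := by
    intro n
    set D := A n \ A (n + 1) with hD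
    have hDm : MeasurableSet D := (hAm n).diff (hAm (n + 1))
    have hDsub : D ⊆ A n := Set.diff_subset
    have hsplit : ∫ ω in A n, S (n + 1) ω ∂μ
        = (∫ ω in A (n + 1), S (n + 1) ω ∂μ) + ∫ ω in D, S (n + 1) ω ∂μ := by
      rw [← setIntegral_union disjoint_sdiff_self_right hDm (hint (n + 1)).integrableOn
        (hint (n + 1)).integrableOn, Set.union_diff_cancel (hAmono n)]
    have hsub : ∫ ω in A n, (S (n + 1) ω - S n ω) ∂μ
        = (∫ ω in A n, S (n + 1) ω ∂μ) - ∫ ω in A n, S n ω ∂μ :=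
      integral_sub (hint (n + 1)).integrableOn (hint n).integrableOn
    have hintmax : Integrable (fun ω => max (S (n + 1) ω - S n ω - Y n ω) 0) μ :=
      (((hint (n + 1)).sub (hint n)).sub (hYint n)).pos_part
    have hptD : ∀ ω ∈ D, S (n + 1) ω - b
        ≤ max (S (n + 1) ω - S n ω - Y n ω) 0 + e n := by
      intro ω hω
      have hωA : ω ∈ A n := hω.1
      have hgt : b < S (n + 1) ω := by
        have h := hω
        rw [hD, hDeq n] at h
        exact h.2
      rcases Nat.eq_zero_or_pos n with hn0 | hn1
      · subst hn0
        have hS0' : S 0 ω = s0 := hS0 ω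
        have hY' : Y 0 ω = max (b - s0) 0 := by rw [hY_def]; simp [hS0']
        have he' : e 0 = max (s0 - b) 0 := by simp [he_def]
        have h8 := le_max_left (S (0 + 1) ω - S 0 ω - Y 0 ω) (0 : ℝ)
        rcases le_total s0 b with h | h
        · have hYv : max (b - s0) 0 = b - s0 := max_eq_left (by linarith)
          have hEv : (0 : ℝ) ≤ max (s0 - b) 0 := le_max_right _ _
          linarith
        · have hYv : max (b - s0) 0 = 0 := max_eq_right (by linarith)
          have hEv : max (s0 - b) 0 = s0 - b := max_eq_left (by linarith)
          linarith
      · have hSnb : S n ω ≤ b := hωA n hn1 le_rfl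
        have hY' : Y n ω = b - S n ω := max_eq_left (by linarith)
        have he' : e n = 0 := by simp [he_def, Nat.pos_iff_ne_zero.mp hn1]
        have h8 := le_max_left (S (n + 1) ω - S n ω - Y n ω) (0 : ℝ)
        linarith
    have hover : ∫ ω in D, (S (n + 1) ω - b) ∂μ ≤ (η₀ + e n) * (a n - a (n + 1)) := by
      have hint3 : Integrable (fun ω => max (S (n + 1) ω - S n ω - Y n ω) 0 + e n) μ :=
        hintmax.add (integrable_const (e n))
      have h1 : ∫ ω in D, (S (n + 1) ω - b) ∂μ
          ≤ ∫ ω in D, (max (S (n + 1) ω - S n ω - Y n ω) 0 + e n) ∂μ :=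
        setIntegral_mono_on ((hint (n + 1)).sub (integrable_const b)).integrableOn
          hint3.integrableOn hDm hptD
      have h2 : ∫ ω in D, (max (S (n + 1) ω - S n ω - Y n ω) 0 + e n) ∂μ
          = (∫ ω in D, max (S (n + 1) ω - S n ω - Y n ω) 0 ∂μ) + e n * (μ D).toReal := by
        rw [integral_add hintmax.integrableOn (integrable_const _).integrableOn,
          setIntegral_const, smul_eq_mul, mul_comm, measureReal_def]
      have h3 : ∫ ω in D, max (S (n + 1) ω - S n ω - Y n ω) 0 ∂μ
          ≤ ∫ ω in A n, max (S (n + 1) ω - S n ω - Y n ω) 0 ∂μ :=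
        setIntegral_mono_set hintmax.integrableOn
          (Filter.Eventually.of_forall fun ω => le_max_right _ _)
          (HasSubset.Subset.eventuallyLE hDsub)
      have h4 := L3 n (Y n) (hYmF n) (hYint n) (hY0 n) (A n) (hAF n)
      have h5 : A n ∩ {ω | Y n ω < S (n + 1) ω - S n ω} ⊆ D := by
        intro ω hω
        rw [hD, hDeq n]
        refine ⟨hω.1, ?_⟩
        have h6 : b - S n ω ≤ Y n ω := le_max_left _ _
        have h7 : Y n ω < S (n + 1) ω - S n ω := hω.2
        show b < S (n + 1) ω
        linarith
      have h6 : (μ (A n ∩ {ω | Y n ω < S (n + 1) ω - S n ω})).toReal ≤ (μ D).toReal :=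
        ENNReal.toReal_mono (measure_ne_top _ _) (measure_mono h5)
      have h7 : (μ D).toReal = a n - a (n + 1) := haTele n
      have h9 := mul_le_mul_of_nonneg_left h6 hη₀.le
      have h10 : e n * (μ D).toReal ≤ e n * (a n - a (n + 1)) := by rw [h7]
      nlinarith [h1, h2, h3, h4]
    have hDint2 : ∫ ω in D, S (n + 1) ω ∂μ
        = (∫ ω in D, (S (n + 1) ω - b) ∂μ) + b * (μ D).toReal := by
      rw [integral_sub (hint (n + 1)).integrableOn (integrable_const b).integrableOn,
        setIntegral_const, smul_eq_mul, mul_comm, measureReal_def]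
      ring
    have h7 : (μ D).toReal = a n - a (n + 1) := haTele n
    have hring : (η₀ + e n) * (a n - a (n + 1)) + b * (a n - a (n + 1))
        = (η₀ + b + e n) * (a n - a (n + 1)) := by ring
    rw [hsub, hsplit, hDint2, h7]
    linarith [hover, hring]
  -- key finite-sum bound
  have hkey : ∀ N, c * ∑ n ∈ Finset.range N, a n ≤ max (b - s0) 0 + η₀ := by
    intro N
    rcases Nat.eq_zero_or_pos N with h0 | hN
    · subst h0
      simp only [Finset.range_zero, Finset.sum_empty, mul_zero]
      have := le_max_right (b - s0) 0
      linarith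
    have hterm : ∀ n ∈ Finset.range N, c * a n ≤ ∫ ω in A n, (S (n + 1) ω - S n ω) ∂μ :=
      fun n _ => L1 n (A n) (hAF n)
    have hsum2 : ∑ n ∈ Finset.range N, ∫ ω in A n, (S (n + 1) ω - S n ω) ∂μ
        ≤ ((∫ ω in A N, S N ω ∂μ) - ∫ ω in A 0, S 0 ω ∂μ)
          + ∑ n ∈ Finset.range N, (η₀ + b + e n) * (a n - a (n + 1)) := by
      calc ∑ n ∈ Finset.range N, ∫ ω in A n, (S (n + 1) ω - S n ω) ∂μ
          ≤ ∑ n ∈ Finset.range N,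
              (((∫ ω in A (n + 1), S (n + 1) ω ∂μ) - ∫ ω in A n, S n ω ∂μ)
                + (η₀ + b + e n) * (a n - a (n + 1))) :=
            Finset.sum_le_sum fun n _ => hstep n
        _ = ((∫ ω in A N, S N ω ∂μ) - ∫ ω in A 0, S 0 ω ∂μ)
            + ∑ n ∈ Finset.range N, (η₀ + b + e n) * (a n - a (n + 1)) := by
            rw [Finset.sum_add_distrib,
              Finset.sum_range_sub (fun n => ∫ ω in A n, S n ω ∂μ)]
    have hg0 : ∫ ω in A 0, S 0 ω ∂μ = s0 := by
      have hfun : S 0 = fun _ => s0 := funext hS0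
      rw [hA0, Measure.restrict_univ, hfun, integral_const, measureReal_def, measure_univ,
        ENNReal.toReal_one, one_smul]
    have hgN : ∫ ω in A N, S N ω ∂μ ≤ b * a N := by
      calc ∫ ω in A N, S N ω ∂μ ≤ ∫ _ω in A N, b ∂μ :=
            setIntegral_mono_on (hint N).integrableOn (integrable_const b).integrableOn
              (hAm N) (fun ω hω => hω N hN le_rfl)
        _ = b * a N := by rw [setIntegral_const, smul_eq_mul, mul_comm, measureReal_def]
    have hsum3 : ∑ n ∈ Finset.range N, (η₀ + b + e n) * (a n - a (n + 1))
        = (η₀ + b) * (1 - a N) + ∑ n ∈ Finset.range N, e n * (a n - a (n + 1)) := by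
      have h1 : ∀ n ∈ Finset.range N, (η₀ + b + e n) * (a n - a (n + 1))
          = (η₀ + b) * (a n - a (n + 1)) + e n * (a n - a (n + 1)) := by
        intro n _; ring
      rw [Finset.sum_congr rfl h1, Finset.sum_add_distrib, ← Finset.mul_sum,
        Finset.sum_range_sub' a, ha1]
    have hesum : ∑ n ∈ Finset.range N, e n * (a n - a (n + 1)) ≤ max (s0 - b) 0 := by
      have h1 : ∀ n ∈ Finset.range N, e n * (a n - a (n + 1)) ≤ e n := by
        intro n _
        have hp1 : a n - a (n + 1) ≤ 1 := by
          have := ha0 (n + 1); have := haLe1 n; linarith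
        exact mul_le_of_le_one_right (he0 n) hp1
      calc ∑ n ∈ Finset.range N, e n * (a n - a (n + 1))
          ≤ ∑ n ∈ Finset.range N, e n := Finset.sum_le_sum h1
        _ = max (s0 - b) 0 := by
            rw [he_def]
            rw [Finset.sum_ite_eq' (Finset.range N) 0 (fun _ => max (s0 - b) 0)]
            simp [Finset.mem_range, hN]
    have hmax : b - s0 + max (s0 - b) 0 = max (b - s0) 0 := by
      rcases le_total s0 b with h | h
      · rw [max_eq_right (by linarith), max_eq_left (by linarith)]; ring
      · rw [max_eq_left (by linarith), max_eq_right (by linarith)]; linarith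
    have hη₁ : η₀ * (1 - a N) ≤ η₀ :=
      mul_le_of_le_one_right hη₀.le (by linarith [ha0 N])
    have hexp : (η₀ + b) * (1 - a N) = η₀ * (1 - a N) + b - b * a N := by ring
    have hc1 : c * ∑ n ∈ Finset.range N, a n
        ≤ ∑ n ∈ Finset.range N, ∫ ω in A n, (S (n + 1) ω - S n ω) ∂μ := by
      rw [Finset.mul_sum]
      exact Finset.sum_le_sum hterm
    linarith [hc1, hsum2, hsum3, hesum, hg0, hgN]
  -- conclusion
  have hdiv : ∀ N, ∑ n ∈ Finset.range N, a n ≤ (max (b - s0) 0 + η₀) / c := by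
    intro N
    rw [le_div_iff₀ hc, mul_comm]
    exact hkey N
  have hsummable : Summable a := summable_of_sum_range_le ha0 hdiv
  constructor
  · have hTsub : ∀ n, {ω | ∀ k : ℕ, 1 ≤ k → S k ω ≤ b} ⊆ A n :=
      fun n ω hω m h1 _ => hω m h1
    have hto : Filter.Tendsto a Filter.atTop (nhds 0) := hsummable.tendsto_atTop_zero
    have hle : ∀ n, (μ {ω | ∀ k : ℕ, 1 ≤ k → S k ω ≤ b}).toReal ≤ a n := fun n =>
      ENNReal.toReal_mono (measure_ne_top _ _) (measure_mono (hTsub n))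
    have h0 : (μ {ω | ∀ k : ℕ, 1 ≤ k → S k ω ≤ b}).toReal ≤ 0 := ge_of_tendsto' hto hle
    have h1 : (μ {ω | ∀ k : ℕ, 1 ≤ k → S k ω ≤ b}).toReal = 0 :=
      le_antisymm h0 ENNReal.toReal_nonneg
    have h2 := (ENNReal.toReal_eq_zero_iff _).mp h1
    exact h2.resolve_right (measure_ne_top μ _)
  · exact Real.tsum_le_of_sum_range_le ha0 hdiv
end

section
/- Let $X$ be a real random variable with $\mathbb{P}[X \geq 0] > 0$ and suppose $\eta_0^+ := \sup_{x \geq 0} \mathbb{E}[X - x \mid X \geq x] < \infty$. Let $X_1, X_2, \dots$ be i.i.d. copies of $X$ with $\mathbb{E}[X] > 0$, $S_n = \sum_{i \leq n} X_i$, and for $A \geq 0, B \geq 0$ let $\tau = \inf\{n \geq 1 : S_n \notin [-B, A]\}$ and $\mathcal{E}_+ = \{S_\tau > A\}$. Then on the event $\mathcal{E}_+$ with $\mathbb{P}[\mathcal{E}_+] > 0$, $\mathbb{E}[S_\tau - A \mid \mathcal{E}_+] \leq \eta_0^+$. -/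
open MeasureTheory ProbabilityTheory
open scoped ENNReal NNReal

/-- Two-sided exit positive overshoot bound: for an i.i.d. random walk with
positive drift and one-step positive mean-excess parameter `η₀⁺`
(i.e. `E[X - x | X ≥ x] ≤ η₀` for every `x ≥ 0`), the mean overshoot above
the upper barrier at the two-sided exit time `τ = inf{n ≥ 1 : S n ∉ [-B, A]}`
satisfies `E[S_τ - A | 𝓔₊] ≤ η₀` on the upper-exit event
`𝓔₊ = {S_τ > A}` whenever `ℙ[𝓔₊] > 0`. -/
theorem two_sided_exit_positive_overshoot
    {Ω : Type*} [MeasurableSpace Ω] (μ : Measure Ω) [IsProbabilityMeasure μ]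
    (X : ℕ → Ω → ℝ) (hmeas : ∀ i, Measurable (X i))
    (hindep : iIndepFun X μ)
    (hident : ∀ i, IdentDistrib (X i) (X 0) μ μ)
    (hint : Integrable (X 0) μ) (hmean : 0 < ∫ ω, X 0 ω ∂μ)
    (hpos : 0 < (μ {ω | 0 ≤ X 0 ω}).toReal)
    (η₀ : ℝ)
    (hη₀ : ∀ x : ℝ, 0 ≤ x → 0 < (μ {ω | x ≤ X 0 ω}).toReal →
      (∫ ω in {ω | x ≤ X 0 ω}, (X 0 ω - x) ∂μ) / (μ {ω | x ≤ X 0 ω}).toReal ≤ η₀)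
    (A B : ℝ) (hA : 0 ≤ A) (hB : 0 ≤ B) :
    -- the two-sided exit time and the upper-exit event
    ∀ τ : Ω → ℕ,
      (∀ ω, τ ω = sInf {n : ℕ | 1 ≤ n ∧
          (∑ k ∈ Finset.range n, X k ω) ∉ Set.Icc (-B) A}) →
      ∀ E : Set Ω,
        E = {ω | (∃ n : ℕ, 1 ≤ n ∧
              (∑ k ∈ Finset.range n, X k ω) ∉ Set.Icc (-B) A) ∧
            A < ∑ k ∈ Finset.range (τ ω), X k ω} →
        0 < (μ E).toReal →
        (∫ ω in E, ((∑ k ∈ Finset.range (τ ω), X k ω) - A) ∂μ) / (μ E).toReal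
          ≤ η₀ := by
  intro τ hτ E hE hEpos
  have hSmeas : ∀ n : ℕ, Measurable (fun ω => ∑ k ∈ Finset.range n, X k ω) :=
    fun n => Finset.measurable_sum _ fun i _ => hmeas i
  set ν : Measure ℝ := μ.map (X 0) with hν
  haveI : IsProbabilityMeasure ν := Measure.isProbabilityMeasure_map (hmeas 0).aemeasurable
  have hIciM : ∀ c : ℝ, MeasurableSet {t : ℝ | c ≤ t} := fun c => measurableSet_Ici
  have hIoiM : ∀ c : ℝ, MeasurableSet {t : ℝ | c < t} := fun c => measurableSet_Ioi
  -- η₀ is nonnegative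
  have hη₀nn : 0 ≤ η₀ := by
    refine le_trans ?_ (hη₀ 0 le_rfl hpos)
    apply div_nonneg _ ENNReal.toReal_nonneg
    exact setIntegral_nonneg (measurableSet_le measurable_const (hmeas 0))
      (fun ω hω => sub_nonneg.mpr hω)
  have hνIci : ∀ x : ℝ, ν {t : ℝ | x ≤ t} = μ {ω | x ≤ X 0 ω} := fun x => by
    rw [hν, Measure.map_apply (hmeas 0) (hIciM x)]; rfl
  -- the mean-excess bound in lintegral form (weak inequality sets)
  have HA : ∀ x : ℝ, 0 ≤ x →
      ∫⁻ t in {t : ℝ | x ≤ t}, ENNReal.ofReal (t - x) ∂ν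
        ≤ ENNReal.ofReal η₀ * ν {t : ℝ | x ≤ t} := by
    intro x hx
    by_cases h0 : μ {ω | x ≤ X 0 ω} = 0
    · have hz : ν {t : ℝ | x ≤ t} = 0 := by rw [hνIci x, h0]
      rw [setLIntegral_measure_zero _ _ hz]
      exact zero_le
    · have hμpos : 0 < (μ {ω | x ≤ X 0 ω}).toReal :=
        ENNReal.toReal_pos h0 (measure_ne_top μ _)
      have hIle : ∫ ω in {ω | x ≤ X 0 ω}, (X 0 ω - x) ∂μ
          ≤ η₀ * (μ {ω | x ≤ X 0 ω}).toReal := (div_le_iff₀ hμpos).mp (hη₀ x hx hμpos)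
      have hMset : MeasurableSet {ω | x ≤ X 0 ω} :=
        measurableSet_le measurable_const (hmeas 0)
      have hInt : IntegrableOn (fun ω => X 0 ω - x) {ω | x ≤ X 0 ω} μ :=
        (hint.sub (integrable_const x)).integrableOn
      have hnn : 0 ≤ᵐ[μ.restrict {ω | x ≤ X 0 ω}] fun ω => X 0 ω - x :=
        (ae_restrict_iff' hMset).mpr (ae_of_all _ fun ω hω => sub_nonneg.mpr hω)
      calc ∫⁻ t in {t : ℝ | x ≤ t}, ENNReal.ofReal (t - x) ∂ν
          = ∫⁻ ω in {ω | x ≤ X 0 ω}, ENNReal.ofReal (X 0 ω - x) ∂μ := by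
            rw [hν, setLIntegral_map (hIciM x)
              (show Measurable fun t : ℝ => ENNReal.ofReal (t - x) by fun_prop) (hmeas 0)]
            rfl
        _ = ENNReal.ofReal (∫ ω in {ω | x ≤ X 0 ω}, (X 0 ω - x) ∂μ) :=
            (ofReal_integral_eq_lintegral_ofReal hInt hnn).symm
        _ ≤ ENNReal.ofReal (η₀ * (μ {ω | x ≤ X 0 ω}).toReal) := ENNReal.ofReal_le_ofReal hIle
        _ = ENNReal.ofReal η₀ * ENNReal.ofReal ((μ {ω | x ≤ X 0 ω}).toReal) :=
            ENNReal.ofReal_mul hη₀nn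
        _ = ENNReal.ofReal η₀ * μ {ω | x ≤ X 0 ω} := by
            rw [ENNReal.ofReal_toReal (measure_ne_top μ _)]
        _ = ENNReal.ofReal η₀ * ν {t : ℝ | x ≤ t} := by rw [hνIci]
  -- the mean-excess bound in lintegral form (strict inequality sets)
  have HB : ∀ x : ℝ, 0 ≤ x →
      ∫⁻ t in {t : ℝ | x < t}, ENNReal.ofReal (t - x) ∂ν
        ≤ ENNReal.ofReal η₀ * ν {t : ℝ | x < t} := by
    intro x hx
    set ρ : Measure ℝ := ν.withDensity (fun t => ENNReal.ofReal (t - x)) with hρ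
    have hρ_apply : ∀ s : Set ℝ, MeasurableSet s →
        ρ s = ∫⁻ t in s, ENNReal.ofReal (t - x) ∂ν := fun s hs => withDensity_apply _ hs
    set Aj : ℕ → Set ℝ := fun j => {t : ℝ | x + 1/((j:ℝ)+1) ≤ t} with hAj
    have hAjM : ∀ j, MeasurableSet (Aj j) := fun j => hIciM _
    have hmono : Monotone Aj := by
      intro i j hij t ht
      have h1 : (1:ℝ)/((j:ℝ)+1) ≤ 1/((i:ℝ)+1) :=
        one_div_le_one_div_of_le (by positivity)
          (by exact_mod_cast add_le_add_left (Nat.cast_le.mpr hij) 1)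
      have ht' : x + 1/((i:ℝ)+1) ≤ t := ht
      show x + 1/((j:ℝ)+1) ≤ t
      linarith
    have hUnion : ⋃ j, Aj j = {t : ℝ | x < t} := by
      ext t
      simp only [Set.mem_iUnion, hAj, Set.mem_setOf_eq]
      constructor
      · rintro ⟨j, hj⟩
        have : (0:ℝ) < 1/((j:ℝ)+1) := by positivity
        linarith
      · intro ht
        obtain ⟨m, hm⟩ := exists_nat_one_div_lt (sub_pos.mpr ht)
        exact ⟨m, by linarith⟩
    have hbound : ∀ j, ρ (Aj j) ≤ ENNReal.ofReal η₀ * ν {t : ℝ | x < t} := by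
      intro j
      refine ENNReal.le_of_forall_pos_le_add fun ε hε _ => ?_
      obtain ⟨m, hm⟩ := exists_nat_one_div_lt (show (0:ℝ) < (ε:ℝ) by exact_mod_cast hε)
      set j' := max j m with hj'
      have hsub : Aj j ⊆ Aj j' := hmono (le_max_left _ _)
      have hεj' : (1:ℝ)/((j':ℝ)+1) ≤ (ε:ℝ) := by
        have h1 : (1:ℝ)/((j':ℝ)+1) ≤ 1/((m:ℝ)+1) :=
          one_div_le_one_div_of_le (by positivity)
            (by exact_mod_cast add_le_add_left (Nat.cast_le.mpr (le_max_right j m)) 1)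
        linarith
      have hepos : (0:ℝ) < 1/((j':ℝ)+1) := by positivity
      have step1 : ρ (Aj j') = ∫⁻ t in Aj j',
          (ENNReal.ofReal (t - (x + 1/((j':ℝ)+1))) + ENNReal.ofReal (1/((j':ℝ)+1))) ∂ν := by
        rw [hρ_apply _ (hAjM j')]
        refine setLIntegral_congr_fun (hAjM j') (fun t ht => ?_)
        have h1 : x + 1/((j':ℝ)+1) ≤ t := ht
        rw [show t - x = (t - (x + 1/((j':ℝ)+1))) + 1/((j':ℝ)+1) by ring,
          ENNReal.ofReal_add (by linarith) hepos.le]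
      have hA1 : ∫⁻ t in Aj j', ENNReal.ofReal (t - (x + 1/((j':ℝ)+1))) ∂ν
          ≤ ENNReal.ofReal η₀ * ν {t : ℝ | x < t} := by
        refine le_trans (HA (x + 1/((j':ℝ)+1)) (by positivity)) ?_
        refine mul_le_mul_right (measure_mono fun t ht => ?_) _
        have ht' : x + 1/((j':ℝ)+1) ≤ t := ht
        show x < t
        linarith
      have hA2 : ∫⁻ _ in Aj j', ENNReal.ofReal (1/((j':ℝ)+1)) ∂ν ≤ (ε : ℝ≥0∞) := by
        rw [setLIntegral_const]
        calc ENNReal.ofReal (1/((j':ℝ)+1)) * ν (Aj j')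
            ≤ ENNReal.ofReal (1/((j':ℝ)+1)) * 1 := mul_le_mul_right prob_le_one _
          _ = ENNReal.ofReal (1/((j':ℝ)+1)) := mul_one _
          _ ≤ (ε : ℝ≥0∞) := by
              rw [← ENNReal.ofReal_coe_nnreal]
              exact ENNReal.ofReal_le_ofReal hεj'
      calc ρ (Aj j) ≤ ρ (Aj j') := measure_mono hsub
        _ = _ := step1
        _ = (∫⁻ t in Aj j', ENNReal.ofReal (t - (x + 1/((j':ℝ)+1))) ∂ν)
              + ∫⁻ _ in Aj j', ENNReal.ofReal (1/((j':ℝ)+1)) ∂ν :=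
            lintegral_add_right _ measurable_const
        _ ≤ ENNReal.ofReal η₀ * ν {t : ℝ | x < t} + (ε : ℝ≥0∞) := add_le_add hA1 hA2
    calc ∫⁻ t in {t : ℝ | x < t}, ENNReal.ofReal (t - x) ∂ν
        = ρ {t : ℝ | x < t} := (hρ_apply _ (hIoiM x)).symm
      _ = ρ (⋃ j, Aj j) := by rw [hUnion]
      _ = ⨆ j, ρ (Aj j) := Directed.measure_iUnion hmono.directed_le
      _ ≤ ENNReal.ofReal η₀ * ν {t : ℝ | x < t} := iSup_le hbound
  -- characterization of the exit time
  have hτ_succ : ∀ ω (n : ℕ), τ ω = n + 1 ↔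
      ((∑ k ∈ Finset.range (n+1), X k ω) ∉ Set.Icc (-B) A ∧
        ∀ k, 1 ≤ k → k ≤ n → (∑ j ∈ Finset.range k, X j ω) ∈ Set.Icc (-B) A) := by
    intro ω n
    rw [hτ ω]
    constructor
    · intro h
      have hne : {m : ℕ | 1 ≤ m ∧ (∑ k ∈ Finset.range m, X k ω) ∉ Set.Icc (-B) A}.Nonempty := by
        by_contra hc
        rw [Set.not_nonempty_iff_eq_empty] at hc
        rw [hc, Nat.sInf_empty] at h
        exact Nat.succ_ne_zero n h.symm
      have hmem := Nat.sInf_mem hne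
      rw [h] at hmem
      refine ⟨hmem.2, fun k hk1 hkn => ?_⟩
      by_contra hc
      have hlt : k < sInf {m : ℕ | 1 ≤ m ∧ (∑ k ∈ Finset.range m, X k ω) ∉ Set.Icc (-B) A} := by
        rw [h]; exact Nat.lt_succ_of_le hkn
      exact Nat.notMem_of_lt_sInf hlt ⟨hk1, hc⟩
    · rintro ⟨h1, h2⟩
      have hmem : n + 1 ∈ {m : ℕ | 1 ≤ m ∧ (∑ k ∈ Finset.range m, X k ω) ∉ Set.Icc (-B) A} :=
        ⟨Nat.succ_le_succ (Nat.zero_le n), h1⟩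
      refine le_antisymm (Nat.sInf_le hmem) (le_csInf ⟨_, hmem⟩ fun k hk => ?_)
      by_contra hc
      push_neg at hc
      exact hk.2 (h2 k hk.1 (Nat.lt_succ_iff.mp hc))
  have hτ_zero : ∀ ω, τ ω = 0 ↔
      ∀ n : ℕ, 1 ≤ n → (∑ k ∈ Finset.range n, X k ω) ∈ Set.Icc (-B) A := by
    intro ω
    rw [hτ ω, Nat.sInf_eq_zero]
    constructor
    · rintro (h | h)
      · exact absurd h.1 (by norm_num)
      · intro n hn
        by_contra hc
        exact Set.eq_empty_iff_forall_notMem.mp h n ⟨hn, hc⟩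
    · intro h
      right
      rw [Set.eq_empty_iff_forall_notMem]
      rintro m ⟨h1, h2⟩
      exact h2 (h m h1)
  have hτmeas : Measurable τ := by
    apply measurable_to_countable'
    intro n
    match n with
    | 0 =>
      have he : τ ⁻¹' {0} = ⋂ (n : ℕ), ⋂ (_ : 1 ≤ n),
          {ω | (∑ k ∈ Finset.range n, X k ω) ∈ Set.Icc (-B) A} := by
        ext ω
        simp only [Set.mem_preimage, Set.mem_singleton_iff, hτ_zero ω, Set.mem_iInter,
          Set.mem_setOf_eq]
      rw [he]
      exact MeasurableSet.iInter fun n => MeasurableSet.iInter fun _ =>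
        (hSmeas n) measurableSet_Icc
    | (n+1) =>
      have he : τ ⁻¹' {n+1} = {ω | (∑ k ∈ Finset.range (n+1), X k ω) ∉ Set.Icc (-B) A} ∩
          ⋂ (k : ℕ), ⋂ (_ : 1 ≤ k), ⋂ (_ : k ≤ n),
            {ω | (∑ j ∈ Finset.range k, X j ω) ∈ Set.Icc (-B) A} := by
        ext ω
        simp only [Set.mem_preimage, Set.mem_singleton_iff, hτ_succ ω n, Set.mem_inter_iff,
          Set.mem_setOf_eq, Set.mem_iInter]
      rw [he]
      exact (((hSmeas (n+1)) measurableSet_Icc).compl).inter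
        (MeasurableSet.iInter fun k => MeasurableSet.iInter fun _ =>
          MeasurableSet.iInter fun _ => (hSmeas k) measurableSet_Icc)
  -- decomposition of the exit event
  set En : ℕ → Set Ω := fun n =>
    {ω | τ ω = n + 1 ∧ A < ∑ k ∈ Finset.range (n+1), X k ω} with hEnd
  have hEnmeas : ∀ n, MeasurableSet (En n) := fun n =>
    (hτmeas (measurableSet_singleton (n+1))).inter
      (measurableSet_lt measurable_const (hSmeas (n+1)))
  have hdisj : Pairwise (Function.onFun Disjoint En) := by
    intro i j hij
    simp only [Function.onFun, Set.disjoint_left]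
    rintro ω ⟨hi, _⟩ ⟨hj, _⟩
    exact hij (Nat.succ_injective (hi.symm.trans hj))
  have hE_eq : E = ⋃ n, En n := by
    rw [hE]
    ext ω
    simp only [Set.mem_setOf_eq, Set.mem_iUnion, hEnd]
    constructor
    · rintro ⟨⟨n0, hn0⟩, hgt⟩
      have hne : {m : ℕ | 1 ≤ m ∧ (∑ k ∈ Finset.range m, X k ω) ∉ Set.Icc (-B) A}.Nonempty :=
        ⟨n0, hn0⟩
      have hτpos : 1 ≤ τ ω := by rw [hτ ω]; exact (Nat.sInf_mem hne).1
      obtain ⟨m, hm⟩ := Nat.exists_eq_succ_of_ne_zero (Nat.one_le_iff_ne_zero.mp hτpos)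
      have hm' : τ ω = m + 1 := hm
      refine ⟨m, hm', ?_⟩
      rw [← hm']
      exact hgt
    · rintro ⟨n, hn1, hn2⟩
      exact ⟨⟨n+1, Nat.succ_le_succ (Nat.zero_le n), ((hτ_succ ω n).mp hn1).1⟩,
        by rw [hn1]; exact hn2⟩
  have hEn_eq : ∀ n, En n = {ω |
      (∀ k, 1 ≤ k → k ≤ n → (∑ j ∈ Finset.range k, X j ω) ∈ Set.Icc (-B) A)
      ∧ A - (∑ k ∈ Finset.range n, X k ω) < X n ω} := by
    intro n
    ext ω
    simp only [hEnd, Set.mem_setOf_eq, hτ_succ ω n]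
    constructor
    · rintro ⟨⟨hout, hin⟩, hgt⟩
      rw [Finset.sum_range_succ] at hgt
      exact ⟨hin, by linarith⟩
    · rintro ⟨hin, hgt⟩
      have hgt2 : A < ∑ k ∈ Finset.range (n+1), X k ω := by
        rw [Finset.sum_range_succ]; linarith
      refine ⟨⟨fun hc => absurd hc.2 (not_le.mpr hgt2), hin⟩, hgt2⟩
  -- per-time-step overshoot bound via independence
  have key : ∀ n : ℕ, ∫⁻ ω in En n,
      ENNReal.ofReal ((∑ k ∈ Finset.range (n+1), X k ω) - A) ∂μ
      ≤ ENNReal.ofReal η₀ * μ (En n) := by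
    intro n
    set Φ : Ω → (Fin n → ℝ) := fun ω k => X k ω with hΦd
    have hΦmeas : Measurable Φ := measurable_pi_lambda _ fun k => hmeas k
    have hψmeas : Measurable (X n) := hmeas n
    have hIF : IndepFun Φ (X n) μ := by
      have h1 := hindep.indepFun_finset (Finset.range n) {n}
        (by simp [Finset.disjoint_right]) hmeas
      have he1 : Measurable (fun (y : (i : Finset.range n) → ℝ) (k : Fin n) =>
          y ⟨(k : ℕ), Finset.mem_range.mpr k.isLt⟩) :=
        measurable_pi_lambda _ fun k => measurable_pi_apply _
      have he2 : Measurable (fun (y : (i : ({n} : Finset ℕ)) → ℝ) =>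
          y ⟨n, Finset.mem_singleton_self n⟩) := measurable_pi_apply _
      exact h1.comp he1 he2
    have hmapprod : μ.map (fun ω => (Φ ω, X n ω)) = (μ.map Φ).prod (μ.map (X n)) :=
      (indepFun_iff_map_prod_eq_prod_map_map hΦmeas.aemeasurable hψmeas.aemeasurable).mp hIF
    have hmapXn : μ.map (X n) = ν := ((hident n).map_eq).trans hν.symm
    set ν₁ : Measure (Fin n → ℝ) := μ.map Φ with hν₁
    haveI : IsProbabilityMeasure ν₁ := Measure.isProbabilityMeasure_map hΦmeas.aemeasurable
    set sf : (Fin n → ℝ) → ℕ → ℝ :=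
      fun y j => ∑ k ∈ Finset.range j, if h : k < n then y ⟨k, h⟩ else 0 with hsfd
    have hsfmeas : ∀ j, Measurable (fun y => sf y j) := by
      intro j
      apply Finset.measurable_sum
      intro k _
      by_cases h : k < n
      · simpa [h] using measurable_pi_apply (⟨k, h⟩ : Fin n)
      · simpa [h] using measurable_const
    set av : (Fin n → ℝ) → ℝ := fun y => A - sf y n with havd
    have havmeas : Measurable av := measurable_const.sub (hsfmeas n)
    set Q : Set (Fin n → ℝ) :=
      {y | ∀ k, 1 ≤ k → k ≤ n → sf y k ∈ Set.Icc (-B) A} with hQd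
    have hQmeas : MeasurableSet Q := by
      have he : Q = ⋂ (k : ℕ), ⋂ (_ : 1 ≤ k), ⋂ (_ : k ≤ n),
          {y | sf y k ∈ Set.Icc (-B) A} := by
        ext y
        simp only [hQd, Set.mem_setOf_eq, Set.mem_iInter]
      rw [he]
      exact MeasurableSet.iInter fun k => MeasurableSet.iInter fun _ =>
        MeasurableSet.iInter fun _ => (hsfmeas k) measurableSet_Icc
    set G : Set ((Fin n → ℝ) × ℝ) := {p | p.1 ∈ Q ∧ av p.1 < p.2} with hGd
    have hGmeas : MeasurableSet G :=
      (measurable_fst hQmeas).inter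
        (measurableSet_lt (havmeas.comp measurable_fst) measurable_snd)
    have hsfΦ : ∀ (ω : Ω) (j : ℕ), j ≤ n → sf (Φ ω) j = ∑ k ∈ Finset.range j, X k ω := by
      intro ω j hj
      apply Finset.sum_congr rfl
      intro k hk
      have hkn : k < n := lt_of_lt_of_le (Finset.mem_range.mp hk) hj
      simp [hsfd, hΦd, hkn]
    have havΦ : ∀ ω : Ω, av (Φ ω) = A - ∑ k ∈ Finset.range n, X k ω := by
      intro ω
      simp only [havd, hsfΦ ω n le_rfl]
    have hpreG : En n = (fun ω => (Φ ω, X n ω)) ⁻¹' G := by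
      rw [hEn_eq n]
      ext ω
      simp only [Set.mem_setOf_eq, Set.mem_preimage, hGd, hQd]
      constructor
      · rintro ⟨hin, hgt⟩
        refine ⟨fun k hk1 hkn => ?_, ?_⟩
        · rw [hsfΦ ω k hkn]; exact hin k hk1 hkn
        · rw [havΦ ω]; exact hgt
      · rintro ⟨hin, hgt⟩
        refine ⟨fun k hk1 hkn => ?_, ?_⟩
        · rw [← hsfΦ ω k hkn]; exact hin k hk1 hkn
        · rw [← havΦ ω]; exact hgt
    have hav_nn : ∀ y ∈ Q, 0 ≤ av y := by
      intro y hy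
      by_cases h0 : n = 0
      · simp [havd, hsfd, h0]; exact hA
      · have h1 := hy n (Nat.one_le_iff_ne_zero.mpr h0) le_rfl
        simp only [havd]
        have := h1.2
        linarith
    have hpairmeas : Measurable (fun ω => (Φ ω, X n ω)) := hΦmeas.prodMk hψmeas
    have hFmeas : Measurable (G.indicator
        (fun p : (Fin n → ℝ) × ℝ => ENNReal.ofReal (p.2 - av p.1))) :=
      (ENNReal.measurable_ofReal.comp (measurable_snd.sub (havmeas.comp measurable_fst))).indicator hGmeas
    have hF1meas : Measurable (G.indicator (fun _ : (Fin n → ℝ) × ℝ => (1:ℝ≥0∞))) :=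
      measurable_const.indicator hGmeas
    have hfun : (fun ω => G.indicator
        (fun p => ENNReal.ofReal (p.2 - av p.1)) (Φ ω, X n ω))
        = (En n).indicator
          (fun ω => ENNReal.ofReal ((∑ k ∈ Finset.range (n+1), X k ω) - A)) := by
      funext ω
      by_cases hω : ω ∈ En n
      · have hg : (Φ ω, X n ω) ∈ G := by rw [hpreG] at hω; exact hω
        rw [Set.indicator_of_mem hg, Set.indicator_of_mem hω]
        congr 1
        rw [havΦ ω, Finset.sum_range_succ]
        ring
      · have hg : (Φ ω, X n ω) ∉ G := by rw [hpreG] at hω; exact hω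
        rw [Set.indicator_of_notMem hg, Set.indicator_of_notMem hω]
    have inner : ∀ y : Fin n → ℝ,
        ∫⁻ t, G.indicator (fun p => ENNReal.ofReal (p.2 - av p.1)) (y, t) ∂ν
          ≤ ENNReal.ofReal η₀ * ∫⁻ t, G.indicator (fun _ => (1:ℝ≥0∞)) (y, t) ∂ν := by
      intro y
      by_cases hyQ : y ∈ Q
      · have h1 : ∀ t : ℝ, G.indicator (fun p => ENNReal.ofReal (p.2 - av p.1)) (y, t)
            = {t : ℝ | av y < t}.indicator (fun t => ENNReal.ofReal (t - av y)) t := by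
          intro t
          by_cases ht : av y < t
          · rw [Set.indicator_of_mem (show (y,t) ∈ G from ⟨hyQ, ht⟩),
              Set.indicator_of_mem (show t ∈ {t : ℝ | av y < t} from ht)]
          · rw [Set.indicator_of_notMem (show (y,t) ∉ G from fun hc => ht hc.2),
              Set.indicator_of_notMem (show t ∉ {t : ℝ | av y < t} from ht)]
        have h2 : ∀ t : ℝ, G.indicator (fun _ => (1:ℝ≥0∞)) (y, t)
            = {t : ℝ | av y < t}.indicator (fun _ => (1:ℝ≥0∞)) t := by
          intro t
          by_cases ht : av y < t
          · rw [Set.indicator_of_mem (show (y,t) ∈ G from ⟨hyQ, ht⟩),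
              Set.indicator_of_mem (show t ∈ {t : ℝ | av y < t} from ht)]
          · rw [Set.indicator_of_notMem (show (y,t) ∉ G from fun hc => ht hc.2),
              Set.indicator_of_notMem (show t ∉ {t : ℝ | av y < t} from ht)]
        simp only [h1, h2]
        rw [lintegral_indicator (hIoiM (av y)), lintegral_indicator (hIoiM (av y))]
        rw [setLIntegral_one]
        exact HB (av y) (hav_nn y hyQ)
      · have h1 : ∀ t : ℝ, G.indicator (fun p => ENNReal.ofReal (p.2 - av p.1)) (y, t) = 0 :=
          fun t => Set.indicator_of_notMem (fun hc => hyQ hc.1) _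
        simp only [h1, lintegral_zero]
        exact zero_le
    have step0 : ∫⁻ ω in En n,
        ENNReal.ofReal ((∑ k ∈ Finset.range (n+1), X k ω) - A) ∂μ
        = ∫⁻ p, G.indicator (fun p => ENNReal.ofReal (p.2 - av p.1)) p ∂(ν₁.prod ν) := by
      rw [← hmapXn, ← hmapprod, lintegral_map hFmeas hpairmeas,
        ← lintegral_indicator (hEnmeas n)]
      exact lintegral_congr fun ω => (congrFun hfun ω).symm
    have step1 : ∫⁻ p, G.indicator (fun p => ENNReal.ofReal (p.2 - av p.1)) p ∂(ν₁.prod ν)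
        = ∫⁻ y, ∫⁻ t, G.indicator (fun p => ENNReal.ofReal (p.2 - av p.1)) (y, t) ∂ν ∂ν₁ :=
      lintegral_prod _ hFmeas.aemeasurable
    have step2 : ∫⁻ y, ∫⁻ t, G.indicator (fun p => ENNReal.ofReal (p.2 - av p.1)) (y, t) ∂ν ∂ν₁
        ≤ ∫⁻ y, ENNReal.ofReal η₀ * ∫⁻ t, G.indicator (fun _ => (1:ℝ≥0∞)) (y, t) ∂ν ∂ν₁ :=
      lintegral_mono inner
    have step3 : ∫⁻ y, ENNReal.ofReal η₀
          * ∫⁻ t, G.indicator (fun _ => (1:ℝ≥0∞)) (y, t) ∂ν ∂ν₁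
        = ENNReal.ofReal η₀ * μ (En n) := by
      rw [lintegral_const_mul _ (Measurable.lintegral_prod_right
          (f := fun y t => G.indicator (fun _ => (1:ℝ≥0∞)) (y, t)) (by exact hF1meas)),
        ← lintegral_prod _ hF1meas.aemeasurable, lintegral_indicator hGmeas, setLIntegral_one,
        ← hmapXn, ← hmapprod, Measure.map_apply hpairmeas hGmeas, ← hpreG]
    exact le_trans (le_of_eq (step0.trans step1)) (le_trans step2 (le_of_eq step3))
  -- summing over the exit time
  have hEmeas : MeasurableSet E := by
    rw [hE_eq]; exact MeasurableSet.iUnion hEnmeas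
  have total : ∫⁻ ω in E, ENNReal.ofReal ((∑ k ∈ Finset.range (τ ω), X k ω) - A) ∂μ
      ≤ ENNReal.ofReal η₀ * μ E := by
    rw [hE_eq, lintegral_iUnion hEnmeas hdisj]
    have congrn : ∀ n, ∫⁻ ω in En n,
        ENNReal.ofReal ((∑ k ∈ Finset.range (τ ω), X k ω) - A) ∂μ
        = ∫⁻ ω in En n, ENNReal.ofReal ((∑ k ∈ Finset.range (n+1), X k ω) - A) ∂μ := by
      intro n
      refine setLIntegral_congr_fun (hEnmeas n) (fun ω hω => ?_)
      have h1 : τ ω = n + 1 := hω.1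
      rw [h1]
    calc ∑' n, ∫⁻ ω in En n, ENNReal.ofReal ((∑ k ∈ Finset.range (τ ω), X k ω) - A) ∂μ
        = ∑' n, ∫⁻ ω in En n, ENNReal.ofReal ((∑ k ∈ Finset.range (n+1), X k ω) - A) ∂μ :=
          tsum_congr congrn
      _ ≤ ∑' n, ENNReal.ofReal η₀ * μ (En n) := ENNReal.tsum_le_tsum key
      _ = ENNReal.ofReal η₀ * ∑' n, μ (En n) := ENNReal.tsum_mul_left
      _ = ENNReal.ofReal η₀ * μ (⋃ n, En n) := by rw [measure_iUnion hdisj hEnmeas]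
  -- conclusion
  have hSτmeas : Measurable fun ω => ∑ k ∈ Finset.range (τ ω), X k ω := by
    have h1 : Measurable fun p : Ω × ℕ => ∑ k ∈ Finset.range p.2, X k p.1 :=
      measurable_from_prod_countable_left fun m => hSmeas m
    exact h1.comp (measurable_id.prodMk hτmeas)
  have hgmeas : Measurable fun ω => (∑ k ∈ Finset.range (τ ω), X k ω) - A :=
    hSτmeas.sub measurable_const
  have hg_nn : 0 ≤ᵐ[μ.restrict E] fun ω => (∑ k ∈ Finset.range (τ ω), X k ω) - A := by
    refine (ae_restrict_iff' hEmeas).mpr (ae_of_all _ fun ω hω => ?_)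
    rw [hE] at hω
    exact sub_nonneg.mpr (le_of_lt hω.2)
  have hIeq : ∫ ω in E, ((∑ k ∈ Finset.range (τ ω), X k ω) - A) ∂μ
      = (∫⁻ ω in E, ENNReal.ofReal ((∑ k ∈ Finset.range (τ ω), X k ω) - A) ∂μ).toReal :=
    integral_eq_lintegral_of_nonneg_ae hg_nn hgmeas.aestronglyMeasurable
  rw [div_le_iff₀ hEpos, hIeq]
  calc (∫⁻ ω in E, ENNReal.ofReal ((∑ k ∈ Finset.range (τ ω), X k ω) - A) ∂μ).toReal
      ≤ (ENNReal.ofReal η₀ * μ E).toReal :=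
        ENNReal.toReal_mono (ENNReal.mul_ne_top ENNReal.ofReal_ne_top (measure_ne_top μ E)) total
    _ = η₀ * (μ E).toReal := by rw [ENNReal.toReal_mul, ENNReal.toReal_ofReal hη₀nn]
end
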